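/- Let A be a self-adjoint matrix in M_n(ℂ) and β ≠ 0 a real number. Define the state ω_β(B) = Tr(e^{-βA} B)/Tr(e^{-βA}) on M_n(ℂ). Then ω_β factors through the conditional expectation onto the diagonal matrices (i.e. ω_β(B) = ω_β(D(B)) where D(B) is the diagonal part of B) if and only if A is a diagonal matrix. -/

import Mathlib

open Matrix

/-- For a self-adjoint matrix `A ∈ Mₙ(ℂ)` and `β ≠ 0`, the state
`ω_β(B) = Tr(e^{-βA} B)/Tr(e^{-βA})` factors through the conditional expectation
onto the diagonal matrices iff `A` is diagonal. -/
theorem stmt0 {n : ℕ} (A : Matrix (Fin n) (Fin n) ℂ) (hA : A.IsHermitian)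
    (β : ℝ) (hβ : β ≠ 0) :
    (∀ B : Matrix (Fin n) (Fin n) ℂ,
        (NormedSpace.exp ((-β : ℂ) • A) * B).trace /
            (NormedSpace.exp ((-β : ℂ) • A)).trace =
          (NormedSpace.exp ((-β : ℂ) • A) *
              Matrix.diagonal (fun i => B i i)).trace /
            (NormedSpace.exp ((-β : ℂ) • A)).trace) ↔
      A.IsDiag := by
  classical
  set M : Matrix (Fin n) (Fin n) ℂ := NormedSpace.exp ((-β : ℂ) • A) with hMdef
  have key : ∀ (w : Fin n → ℂ) (B : Matrix (Fin n) (Fin n) ℂ),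
      (Matrix.diagonal w * B).trace = ∑ i, w i * B i i := by
    intro w B
    simp [Matrix.trace, Matrix.diag, Matrix.diagonal_mul]
  constructor
  · intro h
    -- Setup the spectral decomposition
    set U : Matrix (Fin n) (Fin n) ℂ := (hA.eigenvectorUnitary : Matrix (Fin n) (Fin n) ℂ)
      with hUdef
    have hU1 : U * star U = 1 := (Matrix.mem_unitaryGroup_iff).mp (hA.eigenvectorUnitary).2
    have hU2 : star U * U = 1 := (Matrix.mem_unitaryGroup_iff').mp (hA.eigenvectorUnitary).2
    set d : Fin n → ℝ := hA.eigenvalues with hddef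
    have hspec : A = U * Matrix.diagonal (fun k => (d k : ℂ)) * star U := by
      exact hA.spectral_theorem
    set e : Fin n → ℂ := fun k => Complex.exp ((-β : ℂ) * (d k)) with hedef
    have hsmul : (-β : ℂ) • A = U * Matrix.diagonal (fun k => (-β : ℂ) * (d k)) * star U := by
      rw [hspec, ← Matrix.smul_mul, ← Matrix.mul_smul, ← Matrix.diagonal_smul]
      rfl
    let Uu : (Matrix (Fin n) (Fin n) ℂ)ˣ := ⟨U, star U, hU1, hU2⟩
    have hexp : M = U * Matrix.diagonal e * star U := by
      have hconj := Matrix.exp_units_conj Uu (Matrix.diagonal (fun k => (-β : ℂ) * (d k)))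
      have hUinv : ((Uu⁻¹ : (Matrix (Fin n) (Fin n) ℂ)ˣ) : Matrix (Fin n) (Fin n) ℂ)
          = star U := rfl
      rw [hMdef, hsmul]
      have : U * Matrix.diagonal (fun k => (-β : ℂ) * (d k)) * star U
          = (Uu : Matrix (Fin n) (Fin n) ℂ) * Matrix.diagonal (fun k => (-β : ℂ) * (d k)) *
            ((Uu⁻¹ : (Matrix (Fin n) (Fin n) ℂ)ˣ) : Matrix (Fin n) (Fin n) ℂ) := rfl
      rw [this, hconj, hUinv, Matrix.exp_diagonal, Pi.exp_def]
      congr 2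
      funext k
      rw [← Complex.exp_eq_exp_ℂ]
    -- the trace is nonzero (when n > 0)
    have htr : M.trace = ∑ k, e k := by
      rw [hexp, Matrix.trace_mul_comm, ← Matrix.mul_assoc, hU2, Matrix.one_mul,
        Matrix.trace_diagonal]
    intro i j hij
    have hn : 0 < n := i.pos
    have htr0 : M.trace ≠ 0 := by
      rw [htr]
      have : ∑ k, e k = ((∑ k, Real.exp ((-β) * (d k)) : ℝ) : ℂ) := by
        push_cast
        rfl
      rw [this]
      have hpos : (0 : ℝ) < ∑ k, Real.exp ((-β) * (d k)) :=
        Finset.sum_pos (fun k _ => Real.exp_pos _)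
          (Finset.univ_nonempty_iff.mpr ⟨⟨0, hn⟩⟩)
      exact_mod_cast hpos.ne'
    have h' : ∀ B : Matrix (Fin n) (Fin n) ℂ,
        (M * B).trace = (M * Matrix.diagonal (fun i => B i i)).trace := by
      intro B
      have := h B
      field_simp at this
      exact this
    -- M is diagonal
    have hMd : ∀ p q : Fin n, p ≠ q → M p q = 0 := by
      intro p q hpq
      have hB := h' (Matrix.single q p (1 : ℂ))
      have hzero : (fun i => Matrix.single q p (1 : ℂ) i i) = fun _ => (0 : ℂ) := by
        funext i
        simp [Matrix.single]
        rintro rfl rfl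
        exact absurd rfl hpq
      rw [hzero] at hB
      have htrB : (M * Matrix.single q p (1 : ℂ)).trace = M p q := by
        simp [Matrix.trace, Matrix.diag, Matrix.mul_apply, Matrix.single,
          ite_and, Finset.sum_ite_eq, Finset.sum_ite_eq']
      rw [htrB] at hB
      simpa using hB
    have hMdiag : M = Matrix.diagonal M.diag :=
      ((Matrix.isDiag_iff_diagonal_diag M).mp (fun p q hpq => hMd p q hpq)).symm
    -- eigenvalue relation
    have hMU : Matrix.diagonal M.diag * U = U * Matrix.diagonal e := by
      rw [← hMdiag, hexp]
      calc (U * Matrix.diagonal e * star U) * U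
          = U * Matrix.diagonal e * (star U * U) := by rw [Matrix.mul_assoc]
        _ = U * Matrix.diagonal e := by rw [hU2, Matrix.mul_one]
    set c : ℂ := (-(β : ℂ))⁻¹ * Complex.log (M.diag i) with hcdef
    have heig : ∀ k, U i k ≠ 0 → (d k : ℂ) = c := by
      intro k hk
      have hik := congrFun (congrFun hMU i) k
      rw [Matrix.diagonal_mul, Matrix.mul_diagonal] at hik
      have hmi : M.diag i = e k := by
        rw [mul_comm (U i k) (e k)] at hik
        exact mul_right_cancel₀ hk hik
      have hlog : Complex.log (e k) = (-β : ℂ) * (d k) := by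
        rw [hedef]
        have him : ((-β : ℂ) * (d k)).im = 0 := by
          simp
        refine Complex.log_exp ?_ ?_
        · rw [him]; exact neg_neg_iff_pos.mpr Real.pi_pos
        · rw [him]; exact Real.pi_pos.le
      have hb : (-(β : ℂ)) ≠ 0 := neg_ne_zero.mpr (Complex.ofReal_ne_zero.mpr hβ)
      rw [hcdef, hmi, hlog, ← mul_assoc, inv_mul_cancel₀ hb, one_mul]
    have hA_entry : A i j = ∑ k, U i k * (d k : ℂ) * (star U) k j := by
      rw [hspec]
      simp [Matrix.mul_apply, Matrix.diagonal_apply, mul_ite, mul_zero, ite_mul, zero_mul,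
        Finset.sum_ite_eq, Finset.sum_ite_eq']
    have hterm : ∀ k, U i k * (d k : ℂ) * (star U) k j = c * (U i k * (star U) k j) := by
      intro k
      by_cases hk : U i k = 0
      · simp [hk]
      · rw [heig k hk]; ring
    rw [hA_entry]
    calc ∑ k, U i k * (d k : ℂ) * (star U) k j
        = ∑ k, c * (U i k * (star U) k j) := Finset.sum_congr rfl fun k _ => hterm k
      _ = c * ∑ k, U i k * (star U) k j := by rw [Finset.mul_sum]
      _ = c * (U * star U) i j := by rw [Matrix.mul_apply]
      _ = 0 := by rw [hU1]; simp [Matrix.one_apply, hij]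
  · intro hd B
    have hAd : A = Matrix.diagonal A.diag := hd.diagonal_diag.symm
    have hMdiag : M = Matrix.diagonal (NormedSpace.exp fun i => (-β : ℂ) * A.diag i) := by
      rw [hMdef]
      conv_lhs => rw [hAd]
      rw [← Matrix.diagonal_smul, Matrix.exp_diagonal]
      rfl
    rw [hMdiag, key, key]
    congr 1
    refine Finset.sum_congr rfl fun i _ => ?_
    simp
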